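/- Let V be a real inner product space of finite dimension n ≥ 4, let R be an algebraic curvature tensor on V, let {e₁,…,e_n} be an orthonormal basis of V, and let S₀ = (1/(n(n−1)))·Σ_{i,j=1}^{n} R(e_i,e_j,e_i,e_j) be the normalized scalar curvature of R. If for every orthonormal four-frame {f₁,f₂,f₃,f₄} in V one has R(f₁,f₃,f₁,f₃) + R(f₁,f₄,f₁,f₄) + R(f₂,f₃,f₂,f₃) + R(f₂,f₄,f₂,f₄) > (4n(n−1)/(n²−n+12))·S₀, then for every orthonormal four-frame {f₁,f₂,f₃,f₄} in V one has R(f₁,f₃,f₁,f₃) + R(f₁,f₄,f₁,f₄) + R(f₂,f₃,f₂,f₃) + R(f₂,f₄,f₂,f₄) > (1/2)·(R(f₁,f₂,f₁,f₂) + R(f₃,f₄,f₃,f₄)). -/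

import Mathlib

open scoped RealInnerProductSpace

variable {V : Type*} [NormedAddCommGroup V] [InnerProductSpace ℝ V]

/-- An algebraic curvature tensor on a real inner product space `V`:
an `ℝ`-multilinear map `V × V × V × V → ℝ` with the standard symmetries and
the first Bianchi identity. -/
def IsCurvatureTensor (R : V →ₗ[ℝ] V →ₗ[ℝ] V →ₗ[ℝ] V →ₗ[ℝ] ℝ) : Prop :=
  (∀ X Y Z W : V, R X Y Z W = - R Y X Z W) ∧
  (∀ X Y Z W : V, R X Y Z W = - R X Y W Z) ∧
  (∀ X Y Z W : V, R X Y Z W = R Z W X Y) ∧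
  (∀ X Y Z W : V, R X Y Z W + R X Z W Y + R X W Y Z = 0)

/-- An orthonormal four-frame: four pairwise orthogonal unit vectors. -/
def OrthonormalFrame4 (e₁ e₂ e₃ e₄ : V) : Prop :=
  ‖e₁‖ = 1 ∧ ‖e₂‖ = 1 ∧ ‖e₃‖ = 1 ∧ ‖e₄‖ = 1 ∧
  ⟪e₁, e₂⟫ = 0 ∧ ⟪e₁, e₃⟫ = 0 ∧ ⟪e₁, e₄⟫ = 0 ∧
  ⟪e₂, e₃⟫ = 0 ∧ ⟪e₂, e₄⟫ = 0 ∧ ⟪e₃, e₄⟫ = 0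

open Finset

private lemma sum_bilin_onb {V : Type*} [NormedAddCommGroup V] [InnerProductSpace ℝ V]
    {ι κ : Type*} [Fintype ι] [Fintype κ] [DecidableEq κ]
    (e : OrthonormalBasis ι ℝ V) (b : OrthonormalBasis κ ℝ V) (G : V →ₗ[ℝ] V →ₗ[ℝ] ℝ) :
    ∑ i, G (e i) (e i) = ∑ j, G (b j) (b j) := by
  have h1 : ∀ i : ι, G (e i) (e i)
      = ∑ j : κ, ∑ k : κ, (⟪b j, e i⟫ * ⟪b k, e i⟫) * G (b j) (b k) := by
    intro i
    conv_lhs => rw [← b.sum_repr' (e i)]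
    simp only [map_sum, LinearMap.sum_apply, map_smul, LinearMap.smul_apply, smul_eq_mul,
      Finset.mul_sum, Finset.sum_mul]
    rw [Finset.sum_comm]
    exact Finset.sum_congr rfl fun j _ => Finset.sum_congr rfl fun k _ => by ring
  calc ∑ i, G (e i) (e i)
      = ∑ i, ∑ j, ∑ k, (⟪b j, e i⟫ * ⟪b k, e i⟫) * G (b j) (b k) :=
        Finset.sum_congr rfl fun i _ => h1 i
    _ = ∑ j, ∑ k, (∑ i, ⟪b j, e i⟫ * ⟪b k, e i⟫) * G (b j) (b k) := by
        rw [Finset.sum_comm]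
        refine Finset.sum_congr rfl fun j _ => ?_
        rw [Finset.sum_comm]
        refine Finset.sum_congr rfl fun k _ => ?_
        rw [Finset.sum_mul]
    _ = ∑ j, ∑ k, (if j = k then (1:ℝ) else 0) * G (b j) (b k) := by
        refine Finset.sum_congr rfl fun j _ => Finset.sum_congr rfl fun k _ => ?_
        congr 1
        have h2 : ∀ i, ⟪b j, e i⟫ * ⟪b k, e i⟫ = ⟪b j, e i⟫ * ⟪e i, b k⟫ := fun i => by
          rw [real_inner_comm (b k)]
        rw [Finset.sum_congr rfl fun i _ => h2 i, e.sum_inner_mul_inner]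
        exact orthonormal_iff_ite.mp b.orthonormal j k
    _ = ∑ j, G (b j) (b j) := by
        refine Finset.sum_congr rfl fun j _ => ?_
        simp [ite_mul, Finset.sum_ite_eq]

private lemma sum_curv_onb {V : Type*} [NormedAddCommGroup V] [InnerProductSpace ℝ V]
    {ι κ : Type*} [Fintype ι] [Fintype κ] [DecidableEq ι] [DecidableEq κ]
    (e : OrthonormalBasis ι ℝ V) (b : OrthonormalBasis κ ℝ V)
    (R : V →ₗ[ℝ] V →ₗ[ℝ] V →ₗ[ℝ] V →ₗ[ℝ] ℝ) :
    ∑ i, ∑ j, R (e i) (e j) (e i) (e j) = ∑ i, ∑ j, R (b i) (b j) (b i) (b j) := by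
  have step1 : ∀ x : V, ∑ j, R x (e j) x (e j) = ∑ j, R x (b j) x (b j) := by
    intro x
    have := sum_bilin_onb e b (LinearMap.mk₂ ℝ (fun y z => R x y x z)
      (fun m₁ m₂ n => by simp) (fun c m n => by simp) (fun m n₁ n₂ => by simp)
      (fun c m n => by simp))
    simpa using this
  have step2 : ∀ j : κ, ∑ i : ι, R (e i) (b j) (e i) (b j) = ∑ i : κ, R (b i) (b j) (b i) (b j) := by
    intro j
    have := sum_bilin_onb e b (LinearMap.mk₂ ℝ (fun y z => R y (b j) z (b j))
      (fun m₁ m₂ n => by simp) (fun c m n => by simp) (fun m n₁ n₂ => by simp)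
      (fun c m n => by simp))
    simpa using this
  calc ∑ i : ι, ∑ j : ι, R (e i) (e j) (e i) (e j)
      = ∑ i : ι, ∑ j : κ, R (e i) (b j) (e i) (b j) :=
        Finset.sum_congr rfl fun i _ => step1 (e i)
    _ = ∑ j : κ, ∑ i : ι, R (e i) (b j) (e i) (b j) := Finset.sum_comm
    _ = ∑ j : κ, ∑ i : κ, R (b i) (b j) (b i) (b j) :=
        Finset.sum_congr rfl fun j _ => step2 j
    _ = ∑ i : κ, ∑ j : κ, R (b i) (b j) (b i) (b j) := Finset.sum_comm

private lemma erase1 {m : ℕ} (f : Fin m → ℝ) (x : Fin m) :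
    ∑ y ∈ univ.erase x, f y = (∑ y, f y) - f x :=
  Finset.sum_erase_eq_sub (Finset.mem_univ x)

private lemma erase2 {m : ℕ} (f : Fin m → ℝ) (x y : Fin m) (hyx : y ≠ x) :
    ∑ z ∈ (univ.erase x).erase y, f z = (∑ z, f z) - f x - f y := by
  rw [Finset.sum_erase_eq_sub (Finset.mem_erase.2 ⟨hyx, Finset.mem_univ y⟩), erase1]

private lemma erase3 {m : ℕ} (f : Fin m → ℝ) (x y z : Fin m) (hyx : y ≠ x) (hzx : z ≠ x)
    (hzy : z ≠ y) :
    ∑ w ∈ ((univ.erase x).erase y).erase z, f w = (∑ w, f w) - f x - f y - f z := by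
  rw [Finset.sum_erase_eq_sub
    (Finset.mem_erase.2 ⟨hzy, Finset.mem_erase.2 ⟨hzx, Finset.mem_univ z⟩⟩), erase2 f x y hyx]

private lemma key {m : ℕ} (r : Fin 4 ⊕ Fin m → Fin 4 ⊕ Fin m → ℝ) (C : ℝ)
    (hsym : ∀ i j, r i j = r j i) (hdiag : ∀ i, r i i = 0)
    (hframe : ∀ i j k l, i ≠ j → i ≠ k → i ≠ l → j ≠ k → j ≠ l → k ≠ l →
      C < r i k + r i l + r j k + r j l)
    (hC : ((m : ℝ) ^ 2 + 7 * (m : ℝ) + 24) * C = 4 * ∑ i, ∑ j, r i j) :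
    (1 / 2) * (r (Sum.inl 0) (Sum.inl 1) + r (Sum.inl 2) (Sum.inl 3)) <
      r (Sum.inl 0) (Sum.inl 2) + r (Sum.inl 0) (Sum.inl 3) + r (Sum.inl 1) (Sum.inl 2) + r (Sum.inl 1) (Sum.inl 3) := by
  have nel : ∀ (i j : Fin 4), i ≠ j → (Sum.inl i : Fin 4 ⊕ Fin m) ≠ Sum.inl j :=
    fun i j h hh => h (Sum.inl.inj hh)
  have ner : ∀ (x y : Fin m), x ≠ y → (Sum.inr x : Fin 4 ⊕ Fin m) ≠ Sum.inr y :=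
    fun x y h hh => h (Sum.inr.inj hh)
  obtain ⟨q, hq⟩ : ∃ t : ℝ, t = r (Sum.inl 0) (Sum.inl 2) + r (Sum.inl 0) (Sum.inl 3) + r (Sum.inl 1) (Sum.inl 2) + r (Sum.inl 1) (Sum.inl 3) := ⟨_, rfl⟩
  obtain ⟨s, hs⟩ : ∃ t : ℝ, t = r (Sum.inl 0) (Sum.inl 1) + r (Sum.inl 2) (Sum.inl 3) := ⟨_, rfl⟩
  obtain ⟨Mix, hMix⟩ : ∃ t : ℝ,
    t = ∑ x : Fin m, (r (Sum.inl 0) (Sum.inr x) + r (Sum.inl 1) (Sum.inr x) + r (Sum.inl 2) (Sum.inr x) + r (Sum.inl 3) (Sum.inr x)) := ⟨_, rfl⟩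
  obtain ⟨Out, hOut⟩ : ∃ t : ℝ, t = ∑ x : Fin m, ∑ y : Fin m, r (Sum.inr x) (Sum.inr y) := ⟨_, rfl⟩
  rw [← hq, ← hs]
  have T1 : C < q := by
    rw [hq]
    exact hframe (Sum.inl 0) (Sum.inl 1) (Sum.inl 2) (Sum.inl 3) (nel 0 1 (by decide)) (nel 0 2 (by decide)) (nel 0 3 (by decide))
      (nel 1 2 (by decide)) (nel 1 3 (by decide)) (nel 2 3 (by decide))
  -- total sum identity
  have hT : (∑ i, ∑ j, r i j) = 2*s + 2*q + 2*Mix + Out := by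
    have hinner : ∀ i : Fin 4 ⊕ Fin m, (∑ j, r i j)
        = r i (Sum.inl 0) + r i (Sum.inl 1) + r i (Sum.inl 2) + r i (Sum.inl 3) + ∑ y : Fin m, r i (Sum.inr y) := by
      intro i; rw [Fintype.sum_sum_type, Fin.sum_univ_four]
    rw [Fintype.sum_sum_type]
    simp only [hinner]
    rw [Fin.sum_univ_four, Finset.sum_add_distrib]
    have e1 : ∑ x : Fin m, (r (Sum.inr x) (Sum.inl 0) + r (Sum.inr x) (Sum.inl 1) + r (Sum.inr x) (Sum.inl 2) + r (Sum.inr x) (Sum.inl 3))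
        = ∑ x : Fin m, (r (Sum.inl 0) (Sum.inr x) + r (Sum.inl 1) (Sum.inr x) + r (Sum.inl 2) (Sum.inr x) + r (Sum.inl 3) (Sum.inr x)) :=
      Finset.sum_congr rfl fun x _ => by
        rw [hsym (Sum.inr x) (Sum.inl 0), hsym (Sum.inr x) (Sum.inl 1), hsym (Sum.inr x) (Sum.inl 2), hsym (Sum.inr x) (Sum.inl 3)]
    rw [e1, ← hMix, ← hOut]
    have e2 : (∑ y : Fin m, r (Sum.inl 0) (Sum.inr y)) + (∑ y : Fin m, r (Sum.inl 1) (Sum.inr y)) + (∑ y : Fin m, r (Sum.inl 2) (Sum.inr y))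
        + (∑ y : Fin m, r (Sum.inl 3) (Sum.inr y)) = Mix := by
      rw [hMix, Finset.sum_add_distrib, Finset.sum_add_distrib, Finset.sum_add_distrib]
    linarith [e2, hq, hs, hsym (Sum.inl 0) (Sum.inl 1), hsym (Sum.inl 0) (Sum.inl 2), hsym (Sum.inl 0) (Sum.inl 3), hsym (Sum.inl 1) (Sum.inl 2), hsym (Sum.inl 1) (Sum.inl 3),
      hsym (Sum.inl 2) (Sum.inl 3), hdiag (Sum.inl 0), hdiag (Sum.inl 1), hdiag (Sum.inl 2), hdiag (Sum.inl 3)]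
  -- L1 : A4 aggregate
  have L1 : 4*(m:ℝ)*C ≤ 2*(m:ℝ)*q + 2*Mix := by
    have pt : ∀ x : Fin m, 4*C ≤ 2*q + 2*(r (Sum.inl 0) (Sum.inr x) + r (Sum.inl 1) (Sum.inr x) + r (Sum.inl 2) (Sum.inr x) + r (Sum.inl 3) (Sum.inr x)) := by
      intro x
      have h1 := hframe (Sum.inl 0) (Sum.inr x) (Sum.inl 2) (Sum.inl 3) Sum.inl_ne_inr (nel 0 2 (by decide)) (nel 0 3 (by decide))
        Sum.inr_ne_inl Sum.inr_ne_inl (nel 2 3 (by decide))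
      have h2 := hframe (Sum.inl 1) (Sum.inr x) (Sum.inl 2) (Sum.inl 3) Sum.inl_ne_inr (nel 1 2 (by decide)) (nel 1 3 (by decide))
        Sum.inr_ne_inl Sum.inr_ne_inl (nel 2 3 (by decide))
      have h3 := hframe (Sum.inl 2) (Sum.inr x) (Sum.inl 0) (Sum.inl 1) Sum.inl_ne_inr (nel 2 0 (by decide)) (nel 2 1 (by decide))
        Sum.inr_ne_inl Sum.inr_ne_inl (nel 0 1 (by decide))
      have h4 := hframe (Sum.inl 3) (Sum.inr x) (Sum.inl 0) (Sum.inl 1) Sum.inl_ne_inr (nel 3 0 (by decide)) (nel 3 1 (by decide))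
        Sum.inr_ne_inl Sum.inr_ne_inl (nel 0 1 (by decide))
      rw [hq]
      linarith [hsym (Sum.inr x) (Sum.inl 0), hsym (Sum.inr x) (Sum.inl 1), hsym (Sum.inr x) (Sum.inl 2), hsym (Sum.inr x) (Sum.inl 3), hsym (Sum.inl 2) (Sum.inl 0), hsym (Sum.inl 2) (Sum.inl 1),
        hsym (Sum.inl 3) (Sum.inl 0), hsym (Sum.inl 3) (Sum.inl 1)]
    have hsum := Finset.sum_le_sum (fun x (_ : x ∈ univ) => pt x)
    rw [Finset.sum_const, Finset.card_univ, Fintype.card_fin, nsmul_eq_mul,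
      Finset.sum_add_distrib, Finset.sum_const, Finset.card_univ, Fintype.card_fin,
      nsmul_eq_mul, ← Finset.mul_sum, ← hMix] at hsum
    linarith [hsum]
  -- L2 : A2 aggregate
  have L2 : 2*(m:ℝ)^2*C - 2*(m:ℝ)*C + 2*Mix ≤ 2*(m:ℝ)*Mix := by
    have pt : ∀ x y : Fin m,
        (2*C + if y = x then 2*(r (Sum.inl 0) (Sum.inr x) + r (Sum.inl 1) (Sum.inr x) + r (Sum.inl 2) (Sum.inr x) + r (Sum.inl 3) (Sum.inr x)) - 2*C else 0)
        ≤ (r (Sum.inl 0) (Sum.inr x) + r (Sum.inl 1) (Sum.inr x) + r (Sum.inl 2) (Sum.inr x) + r (Sum.inl 3) (Sum.inr x))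
          + (r (Sum.inl 0) (Sum.inr y) + r (Sum.inl 1) (Sum.inr y) + r (Sum.inl 2) (Sum.inr y) + r (Sum.inl 3) (Sum.inr y)) := by
      intro x y
      by_cases h : y = x
      · subst h; simp; linarith
      · have h1 := hframe (Sum.inl 0) (Sum.inl 1) (Sum.inr x) (Sum.inr y) (nel 0 1 (by decide)) Sum.inl_ne_inr Sum.inl_ne_inr
          Sum.inl_ne_inr Sum.inl_ne_inr (ner x y (Ne.symm h))
        have h2 := hframe (Sum.inl 2) (Sum.inl 3) (Sum.inr x) (Sum.inr y) (nel 2 3 (by decide)) Sum.inl_ne_inr Sum.inl_ne_inr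
          Sum.inl_ne_inr Sum.inl_ne_inr (ner x y (Ne.symm h))
        simp only [h, if_false]
        linarith
    have hsum := Finset.sum_le_sum (fun x (_ : x ∈ univ) =>
      Finset.sum_le_sum (fun y (_ : y ∈ univ) => pt x y))
    have lhs_eq : ∑ x : Fin m, ∑ y : Fin m,
        (2*C + if y = x then 2*(r (Sum.inl 0) (Sum.inr x) + r (Sum.inl 1) (Sum.inr x) + r (Sum.inl 2) (Sum.inr x) + r (Sum.inl 3) (Sum.inr x)) - 2*C else 0)
        = 2*(m:ℝ)^2*C - 2*(m:ℝ)*C + 2*Mix := by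
      have inner : ∀ x : Fin m, ∑ y : Fin m,
          (2*C + if y = x then 2*(r (Sum.inl 0) (Sum.inr x) + r (Sum.inl 1) (Sum.inr x) + r (Sum.inl 2) (Sum.inr x) + r (Sum.inl 3) (Sum.inr x)) - 2*C else 0)
          = (m:ℝ)*(2*C) + (2*(r (Sum.inl 0) (Sum.inr x) + r (Sum.inl 1) (Sum.inr x) + r (Sum.inl 2) (Sum.inr x) + r (Sum.inl 3) (Sum.inr x)) - 2*C) := by
        intro x
        rw [Finset.sum_add_distrib, Finset.sum_const, Finset.card_univ, Fintype.card_fin,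
          nsmul_eq_mul, Fintype.sum_ite_eq']
      simp only [inner]
      rw [Finset.sum_add_distrib, Finset.sum_const, Finset.card_univ, Fintype.card_fin,
        nsmul_eq_mul, Finset.sum_sub_distrib, Finset.sum_const, Finset.card_univ,
        Fintype.card_fin, nsmul_eq_mul, ← Finset.mul_sum, ← hMix]
      ring
    have rhs_eq : ∑ x : Fin m, ∑ y : Fin m,
        ((r (Sum.inl 0) (Sum.inr x) + r (Sum.inl 1) (Sum.inr x) + r (Sum.inl 2) (Sum.inr x) + r (Sum.inl 3) (Sum.inr x))
          + (r (Sum.inl 0) (Sum.inr y) + r (Sum.inl 1) (Sum.inr y) + r (Sum.inl 2) (Sum.inr y) + r (Sum.inl 3) (Sum.inr y))) = 2*(m:ℝ)*Mix := by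
      have inner : ∀ x : Fin m, ∑ y : Fin m,
          ((r (Sum.inl 0) (Sum.inr x) + r (Sum.inl 1) (Sum.inr x) + r (Sum.inl 2) (Sum.inr x) + r (Sum.inl 3) (Sum.inr x))
            + (r (Sum.inl 0) (Sum.inr y) + r (Sum.inl 1) (Sum.inr y) + r (Sum.inl 2) (Sum.inr y) + r (Sum.inl 3) (Sum.inr y)))
          = (m:ℝ)*(r (Sum.inl 0) (Sum.inr x) + r (Sum.inl 1) (Sum.inr x) + r (Sum.inl 2) (Sum.inr x) + r (Sum.inl 3) (Sum.inr x)) + Mix := by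
        intro x
        rw [Finset.sum_add_distrib, Finset.sum_const, Finset.card_univ, Fintype.card_fin,
          nsmul_eq_mul, ← hMix]
      simp only [inner]
      rw [Finset.sum_add_distrib, Finset.sum_const, Finset.card_univ, Fintype.card_fin,
        nsmul_eq_mul, ← Finset.mul_sum, ← hMix]
      ring
    rw [lhs_eq, rhs_eq] at hsum
    exact hsum
  -- L3 : A1 aggregate
  have L3 : 4*(m:ℝ)^2*C - 4*(m:ℝ)*C + (m:ℝ)*q + 2*Mix
      ≤ (m:ℝ)^2*q + 2*(m:ℝ)*Mix + 4*Out := by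
    have pt : ∀ x y : Fin m,
        (4*C + if y = x then q + 2*(r (Sum.inl 0) (Sum.inr x) + r (Sum.inl 1) (Sum.inr x) + r (Sum.inl 2) (Sum.inr x) + r (Sum.inl 3) (Sum.inr x)) - 4*C else 0)
        ≤ q + 2*(r (Sum.inl 0) (Sum.inr y) + r (Sum.inl 1) (Sum.inr y)) + 2*(r (Sum.inl 2) (Sum.inr x) + r (Sum.inl 3) (Sum.inr x)) + 4*r (Sum.inr x) (Sum.inr y) := by
      intro x y
      by_cases h : y = x
      · subst h
        simp
        linarith [hdiag (Sum.inr y)]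
      · have h1 := hframe (Sum.inl 0) (Sum.inr x) (Sum.inl 2) (Sum.inr y) Sum.inl_ne_inr (nel 0 2 (by decide)) Sum.inl_ne_inr
          Sum.inr_ne_inl (ner x y (Ne.symm h)) Sum.inl_ne_inr
        have h2 := hframe (Sum.inl 0) (Sum.inr x) (Sum.inl 3) (Sum.inr y) Sum.inl_ne_inr (nel 0 3 (by decide)) Sum.inl_ne_inr
          Sum.inr_ne_inl (ner x y (Ne.symm h)) Sum.inl_ne_inr
        have h3 := hframe (Sum.inl 1) (Sum.inr x) (Sum.inl 2) (Sum.inr y) Sum.inl_ne_inr (nel 1 2 (by decide)) Sum.inl_ne_inr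
          Sum.inr_ne_inl (ner x y (Ne.symm h)) Sum.inl_ne_inr
        have h4 := hframe (Sum.inl 1) (Sum.inr x) (Sum.inl 3) (Sum.inr y) Sum.inl_ne_inr (nel 1 3 (by decide)) Sum.inl_ne_inr
          Sum.inr_ne_inl (ner x y (Ne.symm h)) Sum.inl_ne_inr
        simp only [h, if_false]
        rw [hq]
        linarith [hsym (Sum.inr x) (Sum.inl 2), hsym (Sum.inr x) (Sum.inl 3)]
    have hsum := Finset.sum_le_sum (fun x (_ : x ∈ univ) =>
      Finset.sum_le_sum (fun y (_ : y ∈ univ) => pt x y))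
    have lhs_eq : ∑ x : Fin m, ∑ y : Fin m,
        (4*C + if y = x then q + 2*(r (Sum.inl 0) (Sum.inr x) + r (Sum.inl 1) (Sum.inr x) + r (Sum.inl 2) (Sum.inr x) + r (Sum.inl 3) (Sum.inr x)) - 4*C else 0)
        = 4*(m:ℝ)^2*C - 4*(m:ℝ)*C + (m:ℝ)*q + 2*Mix := by
      have inner : ∀ x : Fin m, ∑ y : Fin m,
          (4*C + if y = x then q + 2*(r (Sum.inl 0) (Sum.inr x) + r (Sum.inl 1) (Sum.inr x) + r (Sum.inl 2) (Sum.inr x) + r (Sum.inl 3) (Sum.inr x)) - 4*C else 0)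
          = (m:ℝ)*(4*C) + (q + 2*(r (Sum.inl 0) (Sum.inr x) + r (Sum.inl 1) (Sum.inr x) + r (Sum.inl 2) (Sum.inr x) + r (Sum.inl 3) (Sum.inr x)) - 4*C) := by
        intro x
        rw [Finset.sum_add_distrib, Finset.sum_const, Finset.card_univ, Fintype.card_fin,
          nsmul_eq_mul, Fintype.sum_ite_eq']
      simp only [inner]
      rw [Finset.sum_add_distrib, Finset.sum_const, Finset.card_univ, Fintype.card_fin,
        nsmul_eq_mul, Finset.sum_sub_distrib, Finset.sum_add_distrib, Finset.sum_const,
        Finset.card_univ, Fintype.card_fin, nsmul_eq_mul, Finset.sum_const,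
        Finset.card_univ, Fintype.card_fin, nsmul_eq_mul, ← Finset.mul_sum, ← hMix]
      ring
    have rhs_eq : ∑ x : Fin m, ∑ y : Fin m,
        (q + 2*(r (Sum.inl 0) (Sum.inr y) + r (Sum.inl 1) (Sum.inr y)) + 2*(r (Sum.inl 2) (Sum.inr x) + r (Sum.inl 3) (Sum.inr x)) + 4*r (Sum.inr x) (Sum.inr y))
        = (m:ℝ)^2*q + 2*(m:ℝ)*Mix + 4*Out := by
      have inner : ∀ x : Fin m, ∑ y : Fin m,
          (q + 2*(r (Sum.inl 0) (Sum.inr y) + r (Sum.inl 1) (Sum.inr y)) + 2*(r (Sum.inl 2) (Sum.inr x) + r (Sum.inl 3) (Sum.inr x)) + 4*r (Sum.inr x) (Sum.inr y))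
          = (m:ℝ)*q + 2*(∑ y : Fin m, (r (Sum.inl 0) (Sum.inr y) + r (Sum.inl 1) (Sum.inr y)))
            + (m:ℝ)*(2*(r (Sum.inl 2) (Sum.inr x) + r (Sum.inl 3) (Sum.inr x))) + 4*(∑ y : Fin m, r (Sum.inr x) (Sum.inr y)) := by
        intro x
        rw [Finset.sum_add_distrib, Finset.sum_add_distrib, Finset.sum_add_distrib,
          Finset.sum_const, Finset.card_univ, Fintype.card_fin, nsmul_eq_mul,
          Finset.sum_const, Finset.card_univ, Fintype.card_fin, nsmul_eq_mul,
          ← Finset.mul_sum, ← Finset.mul_sum]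
      simp only [inner]
      rw [Finset.sum_add_distrib, Finset.sum_add_distrib, Finset.sum_add_distrib,
        Finset.sum_const, Finset.card_univ, Fintype.card_fin, nsmul_eq_mul,
        Finset.sum_const, Finset.card_univ, Fintype.card_fin, nsmul_eq_mul,
        ← Finset.mul_sum, ← Finset.mul_sum, ← Finset.mul_sum, ← hOut]
      have hsplit : (∑ x : Fin m, (r (Sum.inl 0) (Sum.inr x) + r (Sum.inl 1) (Sum.inr x))) + (∑ x : Fin m, (r (Sum.inl 2) (Sum.inr x) + r (Sum.inl 3) (Sum.inr x)))
          = Mix := by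
        rw [hMix, ← Finset.sum_add_distrib]
        exact Finset.sum_congr rfl fun x _ => by ring
      linear_combination (2*(m:ℝ)) * hsplit
    rw [lhs_eq, rhs_eq] at hsum
    exact hsum
  -- L4 : A3 aggregate
  have L4 : (m:ℝ)*((m:ℝ)-1)*((m:ℝ)-2)*((m:ℝ)-3)*C ≤ (2*(m:ℝ)-6)*(2*(m:ℝ)-4)*Out := by
    have bound : ∀ x : Fin m, ∀ y ∈ univ.erase x, ∀ z ∈ (univ.erase x).erase y,
        ∀ w ∈ ((univ.erase x).erase y).erase z,
        C ≤ (r (Sum.inr x) (Sum.inr z) + r (Sum.inr y) (Sum.inr z)) + (r (Sum.inr x) (Sum.inr w) + r (Sum.inr y) (Sum.inr w)) := by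
      intro x y hy z hz w hw
      obtain ⟨hzy, hz2⟩ := Finset.mem_erase.1 hz
      obtain ⟨hzx, -⟩ := Finset.mem_erase.1 hz2
      obtain ⟨hwz, hw2⟩ := Finset.mem_erase.1 hw
      obtain ⟨hwy, hw3⟩ := Finset.mem_erase.1 hw2
      obtain ⟨hwx, -⟩ := Finset.mem_erase.1 hw3
      have hyx := (Finset.mem_erase.1 hy).1
      have h0 := hframe (Sum.inr x) (Sum.inr y) (Sum.inr z) (Sum.inr w) (ner _ _ (Ne.symm hyx)) (ner _ _ (Ne.symm hzx))
        (ner _ _ (Ne.symm hwx)) (ner _ _ (Ne.symm hzy)) (ner _ _ (Ne.symm hwy))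
        (ner _ _ (Ne.symm hwz))
      linarith
    have hsum := Finset.sum_le_sum (fun x (_ : x ∈ (univ : Finset (Fin m))) =>
      Finset.sum_le_sum (fun y hy => Finset.sum_le_sum (fun z hz =>
        Finset.sum_le_sum (fun w hw => bound x y hy z hz w hw))))
    have lhs_eq : ∑ x : Fin m, ∑ y ∈ univ.erase x, ∑ z ∈ (univ.erase x).erase y,
        ∑ w ∈ ((univ.erase x).erase y).erase z, C
        = (m:ℝ)*((m:ℝ)-1)*((m:ℝ)-2)*((m:ℝ)-3)*C := by
      have r1 : ∀ x : Fin m, ∀ y ∈ univ.erase x, ∀ z ∈ (univ.erase x).erase y,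
          (∑ w ∈ ((univ.erase x).erase y).erase z, C) = ((m:ℝ)-3)*C := by
        intro x y hy z hz
        obtain ⟨hzy, hz2⟩ := Finset.mem_erase.1 hz
        rw [erase3 (fun _ => C) x y z (Finset.mem_erase.1 hy).1 (Finset.mem_erase.1 hz2).1 hzy,
          Finset.sum_const, Finset.card_univ, Fintype.card_fin, nsmul_eq_mul]
        ring
      rw [Finset.sum_congr rfl fun x _ => Finset.sum_congr rfl fun y hy =>
        Finset.sum_congr rfl fun z hz => r1 x y hy z hz]
      have r2 : ∀ x : Fin m, ∀ y ∈ univ.erase x,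
          (∑ z ∈ (univ.erase x).erase y, ((m:ℝ)-3)*C) = ((m:ℝ)-2)*(((m:ℝ)-3)*C) := by
        intro x y hy
        rw [erase2 (fun _ => ((m:ℝ)-3)*C) x y (Finset.mem_erase.1 hy).1, Finset.sum_const,
          Finset.card_univ, Fintype.card_fin, nsmul_eq_mul]
        ring
      rw [Finset.sum_congr rfl fun x _ => Finset.sum_congr rfl fun y hy => r2 x y hy]
      have r3 : ∀ x : Fin m, (∑ y ∈ univ.erase x, ((m:ℝ)-2)*(((m:ℝ)-3)*C))
          = ((m:ℝ)-1)*(((m:ℝ)-2)*(((m:ℝ)-3)*C)) := by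
        intro x
        rw [erase1 (fun _ => ((m:ℝ)-2)*(((m:ℝ)-3)*C)) x, Finset.sum_const, Finset.card_univ,
          Fintype.card_fin, nsmul_eq_mul]
        ring
      rw [Finset.sum_congr rfl fun x _ => r3 x, Finset.sum_const, Finset.card_univ,
        Fintype.card_fin, nsmul_eq_mul]
      ring
    have rhs_eq : ∑ x : Fin m, ∑ y ∈ univ.erase x, ∑ z ∈ (univ.erase x).erase y,
        ∑ w ∈ ((univ.erase x).erase y).erase z, ((r (Sum.inr x) (Sum.inr z) + r (Sum.inr y) (Sum.inr z)) + (r (Sum.inr x) (Sum.inr w) + r (Sum.inr y) (Sum.inr w)))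
        = (2*(m:ℝ)-6)*(2*(m:ℝ)-4)*Out := by
      have r1 : ∀ x : Fin m, ∀ y ∈ univ.erase x, ∀ z ∈ (univ.erase x).erase y,
          (∑ w ∈ ((univ.erase x).erase y).erase z,
            ((r (Sum.inr x) (Sum.inr z) + r (Sum.inr y) (Sum.inr z)) + (r (Sum.inr x) (Sum.inr w) + r (Sum.inr y) (Sum.inr w))))
          = ((m:ℝ)-4)*(r (Sum.inr x) (Sum.inr z) + r (Sum.inr y) (Sum.inr z))
            + ((∑ w : Fin m, r (Sum.inr x) (Sum.inr w)) + (∑ w : Fin m, r (Sum.inr y) (Sum.inr w)) - 2*r (Sum.inr x) (Sum.inr y)) := by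
        intro x y hy z hz
        obtain ⟨hzy, hz2⟩ := Finset.mem_erase.1 hz
        have hyx := (Finset.mem_erase.1 hy).1
        have hzx := (Finset.mem_erase.1 hz2).1
        rw [Finset.sum_add_distrib, erase3 (fun w => r (Sum.inr x) (Sum.inr w) + r (Sum.inr y) (Sum.inr w)) x y z hyx hzx hzy,
          erase3 (fun _ => r (Sum.inr x) (Sum.inr z) + r (Sum.inr y) (Sum.inr z)) x y z hyx hzx hzy, Finset.sum_const,
          Finset.card_univ, Fintype.card_fin, nsmul_eq_mul, Finset.sum_add_distrib]
        rw [hdiag (Sum.inr x), hdiag (Sum.inr y), hsym (Sum.inr y) (Sum.inr x)]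
        ring
      rw [Finset.sum_congr rfl fun x _ => Finset.sum_congr rfl fun y hy =>
        Finset.sum_congr rfl fun z hz => r1 x y hy z hz]
      have r2 : ∀ x : Fin m, ∀ y ∈ univ.erase x,
          (∑ z ∈ (univ.erase x).erase y,
            (((m:ℝ)-4)*(r (Sum.inr x) (Sum.inr z) + r (Sum.inr y) (Sum.inr z))
              + ((∑ w : Fin m, r (Sum.inr x) (Sum.inr w)) + (∑ w : Fin m, r (Sum.inr y) (Sum.inr w)) - 2*r (Sum.inr x) (Sum.inr y))))
          = (2*(m:ℝ)-6)*((∑ w : Fin m, r (Sum.inr x) (Sum.inr w)) + (∑ w : Fin m, r (Sum.inr y) (Sum.inr w)) - 2*r (Sum.inr x) (Sum.inr y)) := by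
        intro x y hy
        have hyx := (Finset.mem_erase.1 hy).1
        rw [Finset.sum_add_distrib, ← Finset.mul_sum,
          erase2 (fun z => r (Sum.inr x) (Sum.inr z) + r (Sum.inr y) (Sum.inr z)) x y hyx,
          erase2 (fun _ => (∑ w : Fin m, r (Sum.inr x) (Sum.inr w)) + (∑ w : Fin m, r (Sum.inr y) (Sum.inr w)) - 2*r (Sum.inr x) (Sum.inr y)) x y hyx,
          Finset.sum_add_distrib, Finset.sum_const, Finset.card_univ, Fintype.card_fin,
          nsmul_eq_mul]
        rw [hdiag (Sum.inr x), hdiag (Sum.inr y), hsym (Sum.inr y) (Sum.inr x)]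
        ring
      rw [Finset.sum_congr rfl fun x _ => Finset.sum_congr rfl fun y hy => r2 x y hy]
      have r3 : ∀ x : Fin m,
          (∑ y ∈ univ.erase x,
            ((2*(m:ℝ)-6)*((∑ w : Fin m, r (Sum.inr x) (Sum.inr w)) + (∑ w : Fin m, r (Sum.inr y) (Sum.inr w)) - 2*r (Sum.inr x) (Sum.inr y))))
          = (2*(m:ℝ)-6)*(((m:ℝ)-4)*(∑ w : Fin m, r (Sum.inr x) (Sum.inr w))
              + ∑ p : Fin m, ∑ w : Fin m, r (Sum.inr p) (Sum.inr w)) := by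
        intro x
        rw [← Finset.mul_sum, Finset.sum_sub_distrib, Finset.sum_add_distrib,
          erase1 (fun _ => ∑ w : Fin m, r (Sum.inr x) (Sum.inr w)) x,
          erase1 (fun y => ∑ w : Fin m, r (Sum.inr y) (Sum.inr w)) x, ← Finset.mul_sum,
          erase1 (fun y => r (Sum.inr x) (Sum.inr y)) x, Finset.sum_const, Finset.card_univ,
          Fintype.card_fin, nsmul_eq_mul]
        rw [hdiag (Sum.inr x)]
        ring
      rw [Finset.sum_congr rfl fun x _ => r3 x, ← Finset.mul_sum, Finset.sum_add_distrib,
        ← Finset.mul_sum, Finset.sum_const, Finset.card_univ, Fintype.card_fin, nsmul_eq_mul,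
        ← hOut]
      ring
    rw [lhs_eq, rhs_eq] at hsum
    exact hsum
  -- endgame
  rcases Nat.lt_or_ge m 4 with hm | hm
  · interval_cases m
    · have hM0 : Mix = 0 := by rw [hMix]; simp
      have hO0 : Out = 0 := by rw [hOut]; simp
      rw [hT] at hC
      norm_num at hC
      linarith
    · have hO0 : Out = 0 := by
        rw [hOut]
        simp [Fin.sum_univ_one, hdiag]
      rw [hT] at hC
      norm_num at hC L1
      linarith
    · rw [hT] at hC
      norm_num at hC L1 L3
      linarith
    · rw [hT] at hC
      norm_num at hC L1 L3
      linarith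
  · have hM : (4:ℝ) ≤ (m:ℝ) := by exact_mod_cast hm
    have h23 : 0 < ((m:ℝ)-2)*((m:ℝ)-3) := by nlinarith
    have t2 : (m:ℝ)*C ≤ Mix := by nlinarith [L2, hM]
    have t3 : (m:ℝ)*((m:ℝ)-1)*C ≤ 4*Out := by nlinarith [L4, h23]
    rw [hT] at hC
    linarith [T1, t2, t3]

theorem stmt_8 {V : Type*} [NormedAddCommGroup V] [InnerProductSpace ℝ V]
    (n : ℕ) (hn : 4 ≤ n) (b : OrthonormalBasis (Fin n) ℝ V)
    (R : V →ₗ[ℝ] V →ₗ[ℝ] V →ₗ[ℝ] V →ₗ[ℝ] ℝ) (hR : IsCurvatureTensor R)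
    (S₀ : ℝ) (hS₀ : S₀ = (1 / ((n : ℝ) * ((n : ℝ) - 1))) *
      ∑ i : Fin n, ∑ j : Fin n, R (b i) (b j) (b i) (b j))
    (hyp : ∀ f₁ f₂ f₃ f₄ : V, OrthonormalFrame4 f₁ f₂ f₃ f₄ →
      R f₁ f₃ f₁ f₃ + R f₁ f₄ f₁ f₄ + R f₂ f₃ f₂ f₃ + R f₂ f₄ f₂ f₄ >
        (4 * (n : ℝ) * ((n : ℝ) - 1) / ((n : ℝ) ^ 2 - (n : ℝ) + 12)) * S₀) :
    ∀ f₁ f₂ f₃ f₄ : V, OrthonormalFrame4 f₁ f₂ f₃ f₄ →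
      R f₁ f₃ f₁ f₃ + R f₁ f₄ f₁ f₄ + R f₂ f₃ f₂ f₃ + R f₂ f₄ f₂ f₄ >
        (1 / 2) * (R f₁ f₂ f₁ f₂ + R f₃ f₄ f₃ f₄) := by
  intro f₁ f₂ f₃ f₄ hf
  haveI : FiniteDimensional ℝ V := b.toBasis.finiteDimensional_of_finite
  set m : ℕ := n - 4 with hm
  have card_ι : Module.finrank ℝ V = Fintype.card (Fin 4 ⊕ Fin m) := by
    rw [Module.finrank_eq_card_basis b.toBasis, Fintype.card_fin]
    simp only [Fintype.card_sum, Fintype.card_fin]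
    omega
  -- the frame as an orthonormal family
  obtain ⟨h1, h2, h3, h4, h12, h13, h14, h23, h24, h34⟩ := hf
  have h21 : ⟪f₂, f₁⟫ = 0 := by rw [real_inner_comm]; exact h12
  have h31 : ⟪f₃, f₁⟫ = 0 := by rw [real_inner_comm]; exact h13
  have h41 : ⟪f₄, f₁⟫ = 0 := by rw [real_inner_comm]; exact h14
  have h32 : ⟪f₃, f₂⟫ = 0 := by rw [real_inner_comm]; exact h23
  have h42 : ⟪f₄, f₂⟫ = 0 := by rw [real_inner_comm]; exact h24
  have h43 : ⟪f₄, f₃⟫ = 0 := by rw [real_inner_comm]; exact h34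
  have hfr4 : Orthonormal ℝ ![f₁, f₂, f₃, f₄] := by
    constructor
    · intro i
      fin_cases i
      · exact h1
      · exact h2
      · exact h3
      · exact h4
    · intro i j hij
      fin_cases i <;> fin_cases j <;>
        first
        | exact absurd rfl hij
        | exact h12 | exact h13 | exact h14 | exact h23 | exact h24 | exact h34
        | exact h21 | exact h31 | exact h41 | exact h32 | exact h42 | exact h43
  set v : (Fin 4 ⊕ Fin m) → V := Sum.elim ![f₁, f₂, f₃, f₄] (fun _ => 0) with hv
  have hON : Orthonormal ℝ ((Set.range (Sum.inl : Fin 4 → Fin 4 ⊕ Fin m)).restrict v) := by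
    have hcomp : ((Set.range (Sum.inl : Fin 4 → Fin 4 ⊕ Fin m)).restrict v) ∘
        (Equiv.ofInjective (Sum.inl : Fin 4 → Fin 4 ⊕ Fin m) Sum.inl_injective)
        = ![f₁, f₂, f₃, f₄] := by
      funext i
      simp only [Function.comp_apply, Set.restrict_apply, Equiv.ofInjective_apply, hv,
        Sum.elim_inl]
      rfl
    have h0 := hfr4
    rw [← hcomp] at h0
    have h2' := h0.comp
      (⇑(Equiv.ofInjective (Sum.inl : Fin 4 → Fin 4 ⊕ Fin m) Sum.inl_injective).symm)
      (Equiv.injective _)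
    have hfin : (((Set.range (Sum.inl : Fin 4 → Fin 4 ⊕ Fin m)).restrict v) ∘
        ⇑(Equiv.ofInjective (Sum.inl : Fin 4 → Fin 4 ⊕ Fin m) Sum.inl_injective)) ∘
        ⇑(Equiv.ofInjective (Sum.inl : Fin 4 → Fin 4 ⊕ Fin m) Sum.inl_injective).symm
        = ((Set.range (Sum.inl : Fin 4 → Fin 4 ⊕ Fin m)).restrict v) := by
      funext x
      simp
    rwa [hfin] at h2'
  obtain ⟨e, he⟩ := hON.exists_orthonormalBasis_extension_of_card_eq card_ι
  have he1 : e (Sum.inl 0) = f₁ := by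
    have := he (Sum.inl 0) ⟨0, rfl⟩; simp [hv] at this; exact this
  have he2 : e (Sum.inl 1) = f₂ := by
    have := he (Sum.inl 1) ⟨1, rfl⟩; simp [hv] at this; exact this
  have he3 : e (Sum.inl 2) = f₃ := by
    have := he (Sum.inl 2) ⟨2, rfl⟩; simp [hv] at this; exact this
  have he4 : e (Sum.inl 3) = f₄ := by
    have := he (Sum.inl 3) ⟨3, rfl⟩; simp [hv] at this; exact this
  -- curvature coefficient function
  set r : (Fin 4 ⊕ Fin m) → (Fin 4 ⊕ Fin m) → ℝ :=
    fun i j => R (e i) (e j) (e i) (e j) with hr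
  have hsym : ∀ i j, r i j = r j i := by
    intro i j
    have ha := hR.1 (e i) (e j) (e i) (e j)
    have hb := hR.2.1 (e j) (e i) (e i) (e j)
    simp only [hr]
    linarith
  have hdiag : ∀ i, r i i = 0 := by
    intro i
    have := hR.1 (e i) (e i) (e i) (e i)
    simp only [hr]
    linarith
  have hframe : ∀ i j k l, i ≠ j → i ≠ k → i ≠ l → j ≠ k → j ≠ l → k ≠ l →
      (4 * (n : ℝ) * ((n : ℝ) - 1) / ((n : ℝ) ^ 2 - (n : ℝ) + 12)) * S₀
        < r i k + r i l + r j k + r j l := by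
    intro i j k l hij hik hil hjk hjl hkl
    exact hyp (e i) (e j) (e k) (e l)
      ⟨e.orthonormal.1 i, e.orthonormal.1 j, e.orthonormal.1 k, e.orthonormal.1 l,
        e.orthonormal.2 hij, e.orthonormal.2 hik, e.orthonormal.2 hil,
        e.orthonormal.2 hjk, e.orthonormal.2 hjl, e.orthonormal.2 hkl⟩
  have hNN : (4:ℝ) ≤ (n:ℝ) := by exact_mod_cast hn
  have hC : ((m : ℝ) ^ 2 + 7 * (m : ℝ) + 24) *
      ((4 * (n : ℝ) * ((n : ℝ) - 1) / ((n : ℝ) ^ 2 - (n : ℝ) + 12)) * S₀)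
      = 4 * ∑ i, ∑ j, r i j := by
    have hinv : ∑ i, ∑ j, r i j = ∑ i : Fin n, ∑ j : Fin n, R (b i) (b j) (b i) (b j) :=
      sum_curv_onb e b R
    have hm4 : ((m:ℕ):ℝ) = (n:ℝ) - 4 := by
      rw [hm]
      push_cast [Nat.cast_sub hn]
      ring
    rw [hinv, hS₀, hm4]
    have d1 : (n:ℝ) * ((n:ℝ) - 1) ≠ 0 := by nlinarith
    have d2 : (n:ℝ) ^ 2 - (n:ℝ) + 12 ≠ 0 := by nlinarith
    have d4 : (n:ℝ) ≠ 0 := by linarith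
    have d5 : (n:ℝ) - 1 ≠ 0 := by linarith
    rw [show ((n:ℝ) - 4) ^ 2 + 7 * ((n:ℝ) - 4) + 24 = (n:ℝ) ^ 2 - (n:ℝ) + 12 by ring]
    rw [div_eq_mul_inv, one_div]
    have u1 := mul_inv_cancel₀ d2
    have u2 := mul_inv_cancel₀ d1
    linear_combination (4 * (∑ i : Fin n, ∑ j : Fin n, R (b i) (b j) (b i) (b j)) *
      (((n:ℝ) * ((n:ℝ) - 1)) * ((n:ℝ) * ((n:ℝ) - 1))⁻¹)) * u1
      + 4 * (∑ i : Fin n, ∑ j : Fin n, R (b i) (b j) (b i) (b j)) * u2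
  have := key r ((4 * (n : ℝ) * ((n : ℝ) - 1) / ((n : ℝ) ^ 2 - (n : ℝ) + 12)) * S₀)
    hsym hdiag hframe hC
  simp only [hr, he1, he2, he3, he4] at this
  linarith [this]
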